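/- Let s > 2 be an integer. The set S⁻ = { ∑_{n≥1} (-1)^n α_n / s^{α_1+...+α_n} : α_n ∈ {1,...,s-1} } is nowhere dense in ℝ. -/

import Mathlib

open Finset MeasureTheory Metric

/-- The set `S⁻` of sums `∑ (-1)ⁿ αₙ / s^(α₁+⋯+αₙ)` over digit sequences with values in
`{1,…,s-1}` (the `n`-th term, counting from `1`, carries sign `(-1)ⁿ`). -/
def Sneg (s : ℕ) : Set ℝ :=
  {x : ℝ | ∃ α : ℕ → ℕ, (∀ n, 1 ≤ α n ∧ α n ≤ s - 1) ∧
    x = ∑' n : ℕ, (-1 : ℝ) ^ (n + 1) * (α n : ℝ) / (s : ℝ) ^ (∑ k ∈ Finset.range (n + 1), α k)}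

/-- The `k`-th term of the series. -/
noncomputable def snegTerm (s : ℕ) (α : ℕ → ℕ) (k : ℕ) : ℝ :=
  (-1 : ℝ) ^ (k + 1) * (α k : ℝ) / (s : ℝ) ^ (∑ j ∈ Finset.range (k + 1), α j)

/-- Extension of a finite digit string to an infinite one. -/
def snegExt (n : ℕ) (β : Fin n → ℕ) : ℕ → ℕ :=
  fun j => if h : j < n then β ⟨j, h⟩ else 1

lemma abs_snegTerm_le (s : ℕ) (hs : 2 < s) (α : ℕ → ℕ)
    (hα : ∀ n, 1 ≤ α n ∧ α n ≤ s - 1) (n k : ℕ) :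
    |snegTerm s α (n + k)| ≤ ((s : ℝ) - 1) * (1 / (s:ℝ)) ^ (∑ j ∈ Finset.range n, α j + (k + 1)) := by
  have hs0 : (0:ℝ) < s := by positivity
  have hA : ∑ j ∈ Finset.range n, α j + (k + 1) ≤ ∑ j ∈ Finset.range (n + k + 1), α j := by
    have hsplit : Finset.range (n + k + 1) = Finset.range n ∪ Finset.Ico n (n + k + 1) := by
      rw [Finset.range_eq_Ico, Finset.range_eq_Ico, Finset.Ico_union_Ico_eq_Ico] <;> omega
    rw [hsplit, Finset.sum_union (by simp [Finset.disjoint_left]; omega)]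
    gcongr
    calc k + 1 = ∑ _j ∈ Finset.Ico n (n + k + 1), 1 := by
          rw [Finset.sum_const, smul_eq_mul, mul_one, Nat.card_Ico]; omega
    _ ≤ ∑ j ∈ Finset.Ico n (n + k + 1), α j := by
        apply Finset.sum_le_sum; intro i _; exact (hα i).1
  have habs : |snegTerm s α (n + k)| =
      (α (n + k) : ℝ) / (s : ℝ) ^ (∑ j ∈ Finset.range (n + k + 1), α j) := by
    rw [snegTerm, abs_div, abs_mul, abs_pow, abs_neg, abs_one, one_pow, one_mul,
      Nat.abs_cast, abs_pow, Nat.abs_cast]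
  rw [habs]
  have h1 : (α (n + k) : ℝ) ≤ (s : ℝ) - 1 := by
    have h := (hα (n + k)).2
    have h' : (α (n+k) : ℝ) ≤ ((s - 1 : ℕ) : ℝ) := by exact_mod_cast h
    rw [Nat.cast_sub (by omega : 1 ≤ s)] at h'
    simpa using h'
  have h2 : ((1:ℝ) / s) ^ (∑ j ∈ Finset.range (n + k + 1), α j) ≤
      ((1:ℝ) / s) ^ (∑ j ∈ Finset.range n, α j + (k + 1)) := by
    apply pow_le_pow_of_le_one (by positivity)
      (by rw [div_le_one hs0]; exact_mod_cast hs.le.trans' (by norm_num)) hA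
  calc (α (n + k) : ℝ) / (s : ℝ) ^ (∑ j ∈ Finset.range (n + k + 1), α j)
      = (α (n + k) : ℝ) * ((1:ℝ) / s) ^ (∑ j ∈ Finset.range (n + k + 1), α j) := by
        rw [div_pow, one_pow, div_eq_mul_inv, div_eq_mul_inv, one_mul]
    _ ≤ ((s:ℝ) - 1) * ((1:ℝ) / s) ^ (∑ j ∈ Finset.range n, α j + (k + 1)) := by
        apply mul_le_mul h1 h2 (by positivity) (by
          have : (1:ℝ) ≤ s := by exact_mod_cast (by omega : 1 ≤ s)
          linarith)

lemma snegTerm_summable (s : ℕ) (hs : 2 < s) (α : ℕ → ℕ)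
    (hα : ∀ n, 1 ≤ α n ∧ α n ≤ s - 1) : Summable (snegTerm s α) := by
  have hs0 : (0:ℝ) < s := by positivity
  have hlt : (1:ℝ)/s < 1 := by
    rw [div_lt_one hs0]; exact_mod_cast hs.le.trans' (by norm_num)
  apply Summable.of_norm_bounded (g := fun k => ((s:ℝ) - 1) * ((1:ℝ) / s) ^ (k + 1))
  · apply Summable.mul_left
    exact ((summable_geometric_of_lt_one (by positivity) hlt).mul_left ((1:ℝ)/s)).congr
      (fun k => by rw [pow_succ, mul_comm])
  · intro k
    have h := abs_snegTerm_le s hs α hα 0 k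
    simpa using h

lemma snegTail_le (s : ℕ) (hs : 2 < s) (α : ℕ → ℕ)
    (hα : ∀ n, 1 ≤ α n ∧ α n ≤ s - 1) (n : ℕ) :
    |∑' k : ℕ, snegTerm s α (k + n)| ≤ ((1:ℝ) / s) ^ (∑ j ∈ Finset.range n, α j) := by
  have hs0 : (0:ℝ) < s := by positivity
  have hlt : (1:ℝ)/s < 1 := by
    rw [div_lt_one hs0]; exact_mod_cast hs.le.trans' (by norm_num)
  set B := ∑ j ∈ Finset.range n, α j with hB
  have hbound : ∀ k : ℕ, |snegTerm s α (k + n)| ≤ ((s:ℝ) - 1) * ((1:ℝ) / s) ^ (B + (k + 1)) := by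
    intro k
    rw [add_comm k n]
    exact abs_snegTerm_le s hs α hα n k
  have hsum : Summable (fun k => snegTerm s α (k + n)) :=
    (snegTerm_summable s hs α hα).comp_injective (add_left_injective n)
  have hsumb : Summable (fun k : ℕ => ((s:ℝ) - 1) * ((1:ℝ) / s) ^ (B + (k + 1))) := by
    apply Summable.mul_left
    exact ((summable_geometric_of_lt_one (by positivity) hlt).mul_left (((1:ℝ)/s)^(B+1))).congr
      (fun k => by rw [← pow_add]; congr 1; omega)
  calc |∑' k : ℕ, snegTerm s α (k + n)| ≤ ∑' k : ℕ, |snegTerm s α (k + n)| := by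
        have hn : Summable fun k => ‖snegTerm s α (k + n)‖ := by
          simpa [Real.norm_eq_abs] using hsum.abs
        have h := norm_tsum_le_tsum_norm hn
        simpa [Real.norm_eq_abs] using h
    _ ≤ ∑' k : ℕ, ((s:ℝ) - 1) * ((1:ℝ) / s) ^ (B + (k + 1)) :=
        Summable.tsum_le_tsum hbound hsum.abs hsumb
    _ = ((s:ℝ) - 1) * (((1:ℝ)/s)^(B+1) * (1 - (1:ℝ)/s)⁻¹) := by
        rw [tsum_mul_left]
        congr 1
        have hc : ∀ k : ℕ, ((1:ℝ)/s) ^ (B + (k + 1)) = ((1:ℝ)/s)^(B+1) * ((1:ℝ)/s)^k := by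
          intro k; rw [← pow_add]; congr 1; omega
        rw [tsum_congr hc, tsum_mul_left, tsum_geometric_of_lt_one (by positivity) hlt]
    _ = ((1:ℝ) / s) ^ B := by
        have h1 : (1:ℝ) - 1/s = ((s:ℝ) - 1)/s := by field_simp
        have h2 : (s:ℝ) - 1 ≠ 0 := by
          have : (3:ℝ) ≤ s := by exact_mod_cast hs
          linarith
        rw [h1, pow_succ]
        field_simp

/-- The center of the covering interval attached to a digit string of length `n`. -/
noncomputable def snegCenter (s n : ℕ) (β : Fin n → ℕ) : ℝ :=
  ∑ k ∈ Finset.range n, snegTerm s (snegExt n β) k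

lemma sneg_subset_cover (s : ℕ) (hs : 2 < s) (n : ℕ) :
    Sneg s ⊆ ⋃ β ∈ Fintype.piFinset (fun _ : Fin n => Finset.Icc 1 (s - 1)),
      Metric.closedBall (snegCenter s n β) (((1:ℝ) / s) ^ (∑ i : Fin n, β i)) := by
  rintro x ⟨α, hα, rfl⟩
  have hx : ∑' k : ℕ, (-1 : ℝ) ^ (k + 1) * (α k : ℝ) / (s : ℝ) ^ (∑ j ∈ Finset.range (k + 1), α j)
      = ∑' k, snegTerm s α k := rfl
  set β : Fin n → ℕ := fun i => α i with hβ
  have hmem : β ∈ Fintype.piFinset (fun _ : Fin n => Finset.Icc 1 (s - 1)) := by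
    rw [Fintype.mem_piFinset]
    intro i
    rw [Finset.mem_Icc]
    exact hα i
  apply Set.mem_biUnion hmem
  have hext : ∀ k < n, snegTerm s (snegExt n β) k = snegTerm s α k := by
    intro k hk
    have hagree : ∀ j, j < n → snegExt n β j = α j := by
      intro j hj; simp [snegExt, hj, hβ]
    unfold snegTerm
    rw [hagree k hk,
      Finset.sum_congr rfl fun j hj => hagree j (lt_of_lt_of_le (Finset.mem_range.1 hj) hk)]
  have hB : ∑ i : Fin n, β i = ∑ j ∈ Finset.range n, α j := by
    rw [Finset.sum_range fun j => α j]
  have hsplit : ∑' k, snegTerm s α k =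
      ∑ k ∈ Finset.range n, snegTerm s α k + ∑' k, snegTerm s α (k + n) :=
    (Summable.sum_add_tsum_nat_add n (snegTerm_summable s hs α hα)).symm
  rw [hx, Metric.mem_closedBall, Real.dist_eq, hsplit]
  have hcenter : snegCenter s n β = ∑ k ∈ Finset.range n, snegTerm s α k :=
    Finset.sum_congr rfl fun k hk => hext k (Finset.mem_range.1 hk)
  rw [hcenter, add_sub_cancel_left, hB]
  exact snegTail_le s hs α hα n

lemma sneg_volume_zero (s : ℕ) (hs : 2 < s) : volume (closure (Sneg s)) = 0 := by
  have hs0 : (0:ℝ) < s := by positivity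
  have key : ∀ n : ℕ, volume (closure (Sneg s)) ≤ ENNReal.ofReal (2 * (1/2 : ℝ) ^ n) := by
    intro n
    set F := Fintype.piFinset (fun _ : Fin n => Finset.Icc 1 (s - 1)) with hF
    set U := ⋃ β ∈ F, Metric.closedBall (snegCenter s n β) (((1:ℝ) / s) ^ (∑ i : Fin n, β i))
      with hU
    have hclosed : IsClosed U := by
      apply Set.Finite.isClosed_biUnion (Finset.finite_toSet F)
      intro β _; exact Metric.isClosed_closedBall
    have hsub : closure (Sneg s) ⊆ U :=
      closure_minimal (sneg_subset_cover s hs n) hclosed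
    calc volume (closure (Sneg s)) ≤ volume U := measure_mono hsub
      _ ≤ ∑ β ∈ F, volume (Metric.closedBall (snegCenter s n β)
            (((1:ℝ) / s) ^ (∑ i : Fin n, β i))) := measure_biUnion_finset_le F _
      _ = ∑ β ∈ F, ENNReal.ofReal (2 * ((1:ℝ) / s) ^ (∑ i : Fin n, β i)) := by
          simp [Real.volume_closedBall]
      _ = ENNReal.ofReal (∑ β ∈ F, 2 * ((1:ℝ) / s) ^ (∑ i : Fin n, β i)) := by
          rw [ENNReal.ofReal_sum_of_nonneg]
          intro β _; positivity
      _ ≤ ENNReal.ofReal (2 * (1/2 : ℝ) ^ n) := by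
          apply ENNReal.ofReal_le_ofReal
          rw [← Finset.mul_sum]
          gcongr 2 * ?_
          have hlt : (1:ℝ)/s < 1 := by
            rw [div_lt_one hs0]; exact_mod_cast hs.le.trans' (by norm_num)
          have hq : ∑ a ∈ Finset.Icc 1 (s-1), ((1:ℝ)/s) ^ a ≤ 1/2 := by
            have h1 : Finset.Icc 1 (s-1) = Finset.Ico 1 s := by
              rw [← Finset.Ico_add_one_right_eq_Icc]; congr 1; omega
            rw [h1, Finset.sum_Ico_eq_sum_range]
            have hc : ∀ k, ((1:ℝ)/s) ^ (1 + k) = (1/s) * (1/s)^k := fun k => by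
              rw [pow_add, pow_one]
            rw [Finset.sum_congr rfl fun k _ => hc k, ← Finset.mul_sum]
            have hg : ∑ k ∈ Finset.range (s - 1), ((1:ℝ)/s)^k ≤ (1 - (1:ℝ)/s)⁻¹ := by
              apply le_trans (Summable.sum_le_tsum _ (fun k _ => by positivity)
                (summable_geometric_of_lt_one (by positivity) hlt))
              exact le_of_eq (tsum_geometric_of_lt_one (by positivity) hlt)
            calc ((1:ℝ)/s) * ∑ k ∈ Finset.range (s - 1), ((1:ℝ)/s)^k
                ≤ ((1:ℝ)/s) * (1 - (1:ℝ)/s)⁻¹ := by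
                  apply mul_le_mul_of_nonneg_left hg (by positivity)
              _ = ((s:ℝ) - 1)⁻¹ := by
                  have h2 : (1:ℝ) - 1/s = ((s:ℝ) - 1)/s := by field_simp
                  have h3 : (s:ℝ) - 1 ≠ 0 := by
                    have : (3:ℝ) ≤ s := by exact_mod_cast hs
                    linarith
                  rw [h2]
                  field_simp
              _ ≤ 1/2 := by
                  rw [one_div]
                  apply inv_anti₀ (by norm_num)
                  have : (3:ℝ) ≤ s := by exact_mod_cast hs
                  linarith
          calc ∑ β ∈ F, ((1:ℝ)/s) ^ (∑ i : Fin n, β i)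
              = ∑ β ∈ F, ∏ i : Fin n, ((1:ℝ)/s) ^ (β i) := by
                apply Finset.sum_congr rfl
                intro β _
                rw [← Finset.prod_pow_eq_pow_sum]
            _ = ∏ _i : Fin n, ∑ a ∈ Finset.Icc 1 (s-1), ((1:ℝ)/s) ^ a :=
                Finset.sum_prod_piFinset _ _
            _ = (∑ a ∈ Finset.Icc 1 (s-1), ((1:ℝ)/s) ^ a) ^ n := by
                rw [Finset.prod_const, Finset.card_univ, Fintype.card_fin]
            _ ≤ (1/2 : ℝ) ^ n := by
                apply pow_le_pow_left₀ _ hq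
                apply Finset.sum_nonneg; intro a _; positivity
  have htend : Filter.Tendsto (fun n : ℕ => ENNReal.ofReal (2 * (1/2 : ℝ) ^ n))
      Filter.atTop (nhds 0) := by
    have h : Filter.Tendsto (fun n : ℕ => 2 * (1/2 : ℝ) ^ n) Filter.atTop (nhds 0) := by
      simpa using (tendsto_pow_atTop_nhds_zero_of_lt_one (by norm_num : (0:ℝ) ≤ 1/2)
        (by norm_num)).const_mul (2:ℝ)
    have h' := (ENNReal.continuous_ofReal.tendsto 0).comp h
    rw [ENNReal.ofReal_zero] at h'
    exact h'
  exact le_antisymm (ge_of_tendsto' htend key) zero_le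

/-- For an integer `s > 2`, the set `S⁻` is nowhere dense in `ℝ`. -/
theorem stmt14 (s : ℕ) (hs : 2 < s) : interior (closure (Sneg s)) = ∅ := by
  by_contra h
  have hne : (interior (closure (Sneg s))).Nonempty := Set.nonempty_iff_ne_empty.2 h
  have hpos := MeasureTheory.Measure.measure_pos_of_nonempty_interior (μ := volume) hne
  rw [sneg_volume_zero s hs] at hpos
  exact lt_irrefl 0 hpos
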